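/- Let q be an even power of an odd prime with √q ≡ 1 (mod 4), and let w ∈ F_q be a nonsquare. Let O be the set of points of PG(2,q) of the form (a² + wc² : cw : w), where a, c range over F_q with a^{√q+1} = 1. Then every point of O is internal to the conic C : X₂² − X₁X₃ = 0, and no two points of O (equal or distinct) are conjugate; in particular O is an independent set of internal points in the Erdős–Rényi graph ER_q. -/

import Mathlib

open Projectivization

/-- Two points of `PG(2,q)` are conjugate with respect to the orthogonal polarity of the
conic `X₂² - X₁X₃ = 0` if the bilinear form `p₃q₁ - 2p₂q₂ + p₁q₃` vanishes (this is
independent of the chosen representatives). -/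
def ConjOdd {F : Type} [Field F] (P Q : Projectivization F (Fin 3 → F)) : Prop :=
  P.rep 2 * Q.rep 0 - 2 * P.rep 1 * Q.rep 1 + P.rep 0 * Q.rep 2 = 0

/-- The Erdős–Rényi polarity graph `ER_q`. -/
def ER (F : Type) [Field F] : SimpleGraph (Projectivization F (Fin 3 → F)) where
  Adj P Q := P ≠ Q ∧ ConjOdd P Q
  symm := ⟨by
    rintro P Q ⟨h1, h2⟩
    exact ⟨h1.symm, by unfold ConjOdd at *; linear_combination h2⟩⟩
  loopless := ⟨fun P h => h.1 rfl⟩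

/-- A point `P` of `PG(2,q)` is internal to the conic `C : X₂² - X₁X₃ = 0` if
`p₂² - p₁p₃` is a nonsquare of `F_q`. -/
def IsInternal {F : Type} [Field F] (P : Projectivization F (Fin 3 → F)) : Prop :=
  ¬ IsSquare (P.rep 1 ^ 2 - P.rep 0 * P.rep 2)

/-- The `K`-orbit `O`: points of the form `(a² + wc² : cw : w)` with `a, c ∈ F_q` and
`a^{√q+1} = 1`. -/
def Oset (F : Type) [Field F] (s : ℕ) (w : F) : Set (Projectivization F (Fin 3 → F)) :=
  {P | ∃ a c : F, a ^ (s + 1) = 1 ∧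
    ∃ hx : (![a ^ 2 + w * c ^ 2, c * w, w] : Fin 3 → F) ≠ 0,
      P = Projectivization.mk F _ hx}

/-- Helper: the chosen representative of `mk F v hv` is a unit multiple of `v`. -/
lemma rep_unit_mul {F : Type} [Field F] (v : Fin 3 → F) (hv : v ≠ 0) :
    ∃ u : Fˣ, ∀ i, (Projectivization.mk F v hv).rep i = (u:F) * v i := by
  obtain ⟨u, hu⟩ := Projectivization.exists_smul_eq_mk_rep F v hv
  exact ⟨u, fun i => by rw [← hu]; simp [Units.smul_def]⟩

/-- Helper: if `-1` is a square and `w` is a nonsquare, then `-(z²w)` is a nonsquare. -/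
lemma nonsq_aux {F : Type} [Field F] {w x z : F} (hw : ¬IsSquare w) (hneg : IsSquare (-1:F))
    (hz : z ≠ 0) (h : x = -(z^2*w)) : ¬ IsSquare x := by
  rintro ⟨r, hr⟩
  obtain ⟨j, hj⟩ := hneg
  apply hw
  refine ⟨j*r*z⁻¹, ?_⟩
  field_simp
  linear_combination h + x*hj + j*j*hr

/-- Key lemma: if `a, b` lie in the subgroup of order `s+1` of `F_q^*` (`q = s²`,
`s = p^k ≡ 1 (mod 4)`), then `a² + b²` is a nonzero square. -/
lemma sum_sq_key (p k s : ℕ) (hp : p.Prime) (hp2 : p ≠ 2) (hs : s = p ^ k)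
    (hmod : s % 4 = 1) (F : Type) [Field F] [Fintype F] [CharP F p]
    (hF : Fintype.card F = s ^ 2)
    {a b : F} (ha : a ^ (s+1) = 1) (hb : b ^ (s+1) = 1) :
    ∃ r : F, r ≠ 0 ∧ a^2 + b^2 = r * r := by
  haveI : Fact p.Prime := ⟨hp⟩
  obtain ⟨t, rfl⟩ : ∃ t, s = 4*t+1 := ⟨s/4, by omega⟩
  have ha0 : a ≠ 0 := by rintro rfl; rw [zero_pow (by omega)] at ha; exact zero_ne_one ha
  have hb0 : b ≠ 0 := by rintro rfl; rw [zero_pow (by omega)] at hb; exact zero_ne_one hb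
  have frob : ∀ x y : F, (x+y)^(4*t+1) = x^(4*t+1)+y^(4*t+1) := fun x y => by
    rw [hs]; exact add_pow_char_pow ..
  have has : a ^ (4*t+1) = a⁻¹ := eq_inv_of_mul_eq_one_left (by rw [← pow_succ]; exact ha)
  have hbs : b ^ (4*t+1) = b⁻¹ := eq_inv_of_mul_eq_one_left (by rw [← pow_succ]; exact hb)
  have hx0 : a^2 + b^2 ≠ 0 := by
    intro hz
    have hi2 : (a * b⁻¹)^2 = -1 := by field_simp; linear_combination hz
    have hi : (a * b⁻¹)^(4*t+1+1) = 1 := by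
      rw [mul_pow, inv_pow, ha, hb, inv_one, mul_one]
    have hi' : (a * b⁻¹)^(4*t+1+1) = -1 := by
      have h4 : 4*t+1+1 = 2*(2*t+1) := by ring
      rw [h4, pow_mul, hi2, Odd.neg_one_pow ⟨t, by ring⟩]
    have h2 : (2:F) = 0 := by rw [hi'] at hi; linear_combination -hi
    have h2' : ((2:ℕ):F) = 0 := by exact_mod_cast h2
    have hdvd := (CharP.cast_eq_zero_iff F p 2).mp h2'
    have := Nat.le_of_dvd two_pos hdvd
    have := hp.two_le
    omega
  set x := a^2 + b^2 with hxdef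
  have hxs : x^(4*t+1) = a⁻¹^2 + b⁻¹^2 := by
    rw [hxdef, frob, pow_right_comm, pow_right_comm b, has, hbs]
  set z := x * (a*b)⁻¹ with hzdef
  have hz0 : z ≠ 0 := by
    rw [hzdef]
    exact mul_ne_zero hx0 (inv_ne_zero (mul_ne_zero ha0 hb0))
  have h1 : x^(4*t+1+1) = z^2 := by
    rw [pow_succ, hxs, hzdef]
    field_simp
    ring
  have h2 : z^(4*t+1) = z := by
    have has' : a⁻¹ ^ (4*t+1) = a := by rw [inv_pow, has, inv_inv]
    have hbs' : b⁻¹ ^ (4*t+1) = b := by rw [inv_pow, hbs, inv_inv]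
    rw [hzdef, mul_pow, hxs, mul_inv, mul_pow, has', hbs']
    field_simp
    ring
  have h3 : z^(4*t) = 1 := by
    have : z^(4*t) * z = 1 * z := by rw [one_mul, ← pow_succ]; exact h2
    exact mul_right_cancel₀ hz0 this
  have hxe : x ^ (Fintype.card F / 2) = 1 := by
    have hcard2 : Fintype.card F / 2 = (4*t+1+1)*(2*t) := by
      rw [hF]
      have : (4*t+1)^2 = ((4*t+1+1)*(2*t))*2+1 := by ring
      omega
    rw [hcard2, pow_mul, h1, ← pow_mul]
    have h4 : 2*(2*t) = 4*t := by ring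
    rw [h4, h3]
  have hchar2 : ringChar F ≠ 2 := by rw [ringChar.eq F p]; exact hp2
  obtain ⟨r, hr⟩ := (FiniteField.isSquare_iff hchar2 hx0).mpr hxe
  exact ⟨r, fun h => hx0 (by rw [hr, h, mul_zero]), hr⟩

/-- Let `q = s²` be an even power of an odd prime with `s = √q ≡ 1 (mod 4)` and let
`w ∈ F_q` be a nonsquare. Then every point of `O` is internal to `C : X₂² - X₁X₃ = 0`,
no two points of `O` (equal or distinct) are conjugate, and in particular `O` is an
independent set of internal points in `ER_q`. -/
theorem Oset_internal_non_conjugate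
    (p k s : ℕ) (hp : p.Prime) (hpodd : Odd p) (hk : 0 < k) (hs : s = p ^ k)
    (hmod : s % 4 = 1)
    (F : Type) [Field F] [Fintype F] (hF : Fintype.card F = s ^ 2)
    (w : F) (hw : ¬ IsSquare w) :
    (∀ P ∈ Oset F s w, IsInternal P) ∧
    (∀ P ∈ Oset F s w, ∀ Q ∈ Oset F s w,
      P.rep 2 * Q.rep 0 - 2 * P.rep 1 * Q.rep 1 + P.rep 0 * Q.rep 2 ≠ 0) ∧
    (∀ P ∈ Oset F s w, ∀ Q ∈ Oset F s w, ¬ (ER F).Adj P Q) := by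
  have hp2 : p ≠ 2 := by rintro rfl; exact (Nat.not_odd_iff_even.mpr even_two) hpodd
  -- the characteristic of `F` is `p`
  haveI : CharP F (ringChar F) := ringChar.charP F
  obtain ⟨n, hrp, hcard⟩ := FiniteField.card F (ringChar F)
  have hpr : ringChar F = p := by
    have h1 : (ringChar F) ^ (n:ℕ) = p ^ (2*k) := by
      rw [← hcard, hF, hs, ← pow_mul, mul_comm 2 k]
    have h2 : ringChar F ∣ p ^ (2*k) := h1 ▸ dvd_pow_self (ringChar F) n.pos.ne'
    exact (Nat.prime_dvd_prime_iff_eq hrp hp).mp (hrp.dvd_of_dvd_pow h2)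
  haveI : CharP F p := ringChar.of_eq hpr
  -- `-1` is a square in `F`
  have hneg1 : IsSquare (-1 : F) := by
    rw [FiniteField.isSquare_neg_one_iff, hF]
    obtain ⟨t, rfl⟩ : ∃ t, s = 4*t+1 := ⟨s/4, by omega⟩
    have : (4*t+1)^2 = 4*(4*t*t+2*t)+1 := by ring
    omega
  have hw0 : w ≠ 0 := fun h => hw (h ▸ ⟨0, (mul_zero 0).symm⟩)
  -- the main computation: no two (possibly equal) points of `O` are conjugate
  have main : ∀ P ∈ Oset F s w, ∀ Q ∈ Oset F s w,
      P.rep 2 * Q.rep 0 - 2 * P.rep 1 * Q.rep 1 + P.rep 0 * Q.rep 2 ≠ 0 := by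
    rintro P ⟨a, c, ha, hx, rfl⟩ Q ⟨b, d, hb, hy, rfl⟩ hconj
    obtain ⟨u, hu⟩ := rep_unit_mul _ hx
    obtain ⟨v, hv⟩ := rep_unit_mul _ hy
    rw [hu 2, hu 1, hu 0, hv 0, hv 1, hv 2] at hconj
    simp only [Matrix.cons_val_zero, Matrix.cons_val_one, Matrix.head_cons,
      Matrix.cons_val_two, Matrix.tail_cons] at hconj
    -- the form equals u*v*w*(a²+b²+w(c-d)²)
    have hform : (u:F) * v * w * (a^2+b^2+w*(c-d)^2) = 0 := by linear_combination hconj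
    have hzero : a^2+b^2+w*(c-d)^2 = 0 := by
      rcases mul_eq_zero.mp hform with h | h
      · exact absurd h (mul_ne_zero (mul_ne_zero u.ne_zero v.ne_zero) hw0)
      · exact h
    obtain ⟨r, hr0, hr⟩ := sum_sq_key p k s hp hp2 hs hmod F hF ha hb
    -- hence w(c-d)² = -(r²), so c ≠ d and w is a square: contradiction
    have hcd : c - d ≠ 0 := by
      intro h
      rw [h] at hzero
      apply hr0
      have : r * r = 0 := by linear_combination hzero - hr
      rcases mul_eq_zero.mp this with h' | h' <;> exact h'
    obtain ⟨j, hj⟩ := hneg1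
    apply hw
    refine ⟨j * r * (c-d)⁻¹, ?_⟩
    field_simp
    linear_combination hzero - hr + r^2*hj
  refine ⟨?_, main, fun P hP Q hQ hadj => main P hP Q hQ hadj.2⟩
  -- internality
  rintro P ⟨a, c, ha, hx, rfl⟩
  obtain ⟨u, hu⟩ := rep_unit_mul _ hx
  unfold IsInternal
  rw [hu 1, hu 0, hu 2]
  simp only [Matrix.cons_val_zero, Matrix.cons_val_one, Matrix.head_cons,
    Matrix.cons_val_two, Matrix.tail_cons]
  have ha0 : a ≠ 0 := by
    rintro rfl; rw [zero_pow (by omega)] at ha; exact zero_ne_one ha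
  exact nonsq_aux hw hneg1 (mul_ne_zero u.ne_zero ha0) (by ring)
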